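/- Let q be a prime power, let A ⊆ 𝔽_q be nonempty, and let P ∈ 𝔽_q[x_1, …, x_n] be a nonzero polynomial of degree d. Then Σ_{a ∈ A^n} mult(P, a) ≤ d · |A|^{n−1}. -/

import Mathlib

/-- The `β`-th Hasse derivative of a multivariate polynomial `f`: the coefficient of
`y^β` in `f(x + y)`, as a polynomial in `x`. -/
noncomputable def hasseDeriv {m : ℕ} {F : Type*} [CommRing F]
    (β : Fin m →₀ ℕ) (f : MvPolynomial (Fin m) F) : MvPolynomial (Fin m) F :=
  MvPolynomial.coeff β
    (MvPolynomial.eval₂ (MvPolynomial.C.comp MvPolynomial.C)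
      (fun i => MvPolynomial.C (MvPolynomial.X i) + MvPolynomial.X i) f)

/-- The multiplicity of `f` at the point `a`: the supremum of all `M ∈ ℤ_{≥0}` such that
`f^{(β)}(a) = 0` for all `β` with `|β| < M`. -/
noncomputable def polyMult {m : ℕ} {F : Type*} [CommRing F]
    (f : MvPolynomial (Fin m) F) (a : Fin m → F) : ℕ∞ :=
  ⨆ M ∈ {M : ℕ | ∀ β : Fin m →₀ ℕ, (∑ i, β i) < M →
    MvPolynomial.eval a (hasseDeriv β f) = 0}, (M : ℕ∞)

namespace SZAux

open MvPolynomial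

variable {F : Type*} [CommRing F] {m : ℕ}

/-- Translation substitution `x_i ↦ a_i + x_i`. -/
noncomputable def tr (a : Fin m → F) : MvPolynomial (Fin m) F →+* MvPolynomial (Fin m) F :=
  eval₂Hom C (fun i => C (a i) + X i)

@[simp] lemma tr_C (a : Fin m → F) (r : F) : tr a (C r) = C r := by simp [tr]
@[simp] lemma tr_X (a : Fin m → F) (i : Fin m) : tr a (X i) = C (a i) + X i := by simp [tr]

lemma tr_tr (a : Fin m → F) (f : MvPolynomial (Fin m) F) : tr (-a) (tr a f) = f := by
  have : (tr (-a)).comp (tr a) = RingHom.id _ := by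
    apply MvPolynomial.ringHom_ext <;> intros <;> simp [tr]
  simpa using congrArg (fun g => g f) this

lemma tr_injective (a : Fin m → F) : Function.Injective (tr a) := by
  intro f g h
  have := congrArg (tr (-a)) h
  rwa [tr_tr, tr_tr] at this

lemma tr_eq_zero_iff {a : Fin m → F} {f : MvPolynomial (Fin m) F} : tr a f = 0 ↔ f = 0 :=
  ⟨fun h => tr_injective a (by simpa using h), fun h => by simp [h]⟩

lemma eval_hasseDeriv (a : Fin m → F) (β : Fin m →₀ ℕ) (f : MvPolynomial (Fin m) F) :
    MvPolynomial.eval a (hasseDeriv β f) = coeff β (tr a f) := by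
  rw [hasseDeriv, ← MvPolynomial.coeff_map]
  congr 1
  have : (MvPolynomial.map (MvPolynomial.eval a)).comp
      (eval₂Hom (MvPolynomial.C.comp MvPolynomial.C)
        (fun i : Fin m => C (X i) + X i)) = tr a := by
    apply MvPolynomial.ringHom_ext <;> intros <;> simp [tr]
  exact congrArg (fun g => g f) this

/-- The minimal total degree of a monomial of `g` (`⊤` if `g = 0`). -/
noncomputable def ord (g : MvPolynomial (Fin m) F) : ℕ∞ :=
  g.support.inf fun β => ((∑ i, β i : ℕ) : ℕ∞)

lemma ord_le {g : MvPolynomial (Fin m) F} {β : Fin m →₀ ℕ} (h : coeff β g ≠ 0) :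
    ord g ≤ ((∑ i, β i : ℕ) : ℕ∞) :=
  Finset.inf_le (mem_support_iff.2 h)

lemma coeff_eq_zero_of_lt_ord {g : MvPolynomial (Fin m) F} {β : Fin m →₀ ℕ}
    (h : ((∑ i, β i : ℕ) : ℕ∞) < ord g) : coeff β g = 0 := by
  by_contra hc
  exact absurd (ord_le hc) (not_le.2 h)

lemma exists_ord {g : MvPolynomial (Fin m) F} (hg : g ≠ 0) :
    ∃ β, coeff β g ≠ 0 ∧ ord g = ((∑ i, β i : ℕ) : ℕ∞) := by
  obtain ⟨β, hβ, h⟩ := Finset.exists_mem_eq_inf g.support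
    (support_nonempty.2 hg) (fun β => ((∑ i, β i : ℕ) : ℕ∞))
  exact ⟨β, mem_support_iff.1 hβ, h⟩

lemma polyMult_eq (f : MvPolynomial (Fin m) F) (a : Fin m → F) :
    polyMult f a = ord (tr a f) := by
  have key : ∀ M : ℕ, (∀ β : Fin m →₀ ℕ, (∑ i, β i) < M →
      MvPolynomial.eval a (hasseDeriv β f) = 0) ↔ (M : ℕ∞) ≤ ord (tr a f) := by
    intro M
    constructor
    · intro h
      refine Finset.le_inf fun β hβ => ?_
      rw [Nat.cast_le]
      by_contra hlt
      exact (mem_support_iff.1 hβ) (by rw [← eval_hasseDeriv]; exact h β (not_le.1 hlt))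
    · intro h β hβ
      rw [eval_hasseDeriv]
      exact coeff_eq_zero_of_lt_ord (lt_of_lt_of_le (by exact_mod_cast hβ) h)
  rw [polyMult]
  apply le_antisymm
  · exact iSup₂_le fun M hM => (key M).1 hM
  · cases h : ord (tr a f) with
    | top =>
      have hle : ∀ M : ℕ, (M : ℕ∞) ≤ ⨆ M ∈ {M : ℕ | ∀ β : Fin m →₀ ℕ, (∑ i, β i) < M →
          MvPolynomial.eval a (hasseDeriv β f) = 0}, (M : ℕ∞) := fun M =>
        le_iSup₂_of_le M ((key M).2 (by rw [h]; exact le_top)) le_rfl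
      by_contra hc
      obtain ⟨k, hk⟩ := WithTop.ne_top_iff_exists.1 (ne_top_of_lt (not_le.1 hc))
      have h1 : ((k + 1 : ℕ) : ℕ∞) ≤ (k : ℕ∞) :=
        le_trans (hle (k + 1)) (le_of_eq hk.symm)
      exact Nat.not_succ_le_self k (by exact_mod_cast h1)
    | coe k => exact le_iSup₂_of_le k ((key k).2 (le_of_eq h.symm)) le_rfl

lemma polyMult_coe_toNat {f : MvPolynomial (Fin m) F} (hf : f ≠ 0) (a : Fin m → F) :
    polyMult f a = (((polyMult f a).toNat : ℕ) : ℕ∞) := by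
  obtain ⟨β, hβ, hord⟩ := exists_ord (tr_eq_zero_iff.not.2 hf : tr a f ≠ 0)
  rw [polyMult_eq, hord, ENat.toNat_coe]

lemma polyMult_zerovars {f : MvPolynomial (Fin 0) F} (hf : f ≠ 0) (a : Fin 0 → F) :
    polyMult f a = 0 := by
  obtain ⟨β, hβ, hord⟩ := exists_ord (tr_eq_zero_iff.not.2 hf : tr a f ≠ 0)
  rw [polyMult_eq, hord]
  simp

section Univariate

open Polynomial

variable {K : Type*} [Field K]

lemma taylor_coeff_rootMultiplicity_ne_zero {u : K[X]} (hu : u ≠ 0) (b : K) :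
    (taylor b u).coeff (rootMultiplicity b u) ≠ 0 := by
  set r := rootMultiplicity b u with hr
  have hdvd := Polynomial.pow_mul_divByMonic_rootMultiplicity_eq u b
  have hev := Polynomial.eval_divByMonic_pow_rootMultiplicity_ne_zero b hu
  conv_lhs => rw [← hdvd]
  have hpow : taylor b ((Polynomial.X - Polynomial.C b) ^ r) = Polynomial.X ^ r := by
    rw [show taylor b ((Polynomial.X - Polynomial.C b) ^ r) = taylorAlgHom b ((Polynomial.X - Polynomial.C b) ^ r) from rfl,
      map_pow, map_sub]
    change (taylor b Polynomial.X - taylor b (Polynomial.C b)) ^ r = _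
    simp [taylorAlgHom, taylor_X, taylor_C]
  rw [taylor_mul, hpow]
  have hc := coeff_X_pow_mul ((taylor b) (u /ₘ (Polynomial.X - Polynomial.C b) ^ r)) r 0
  rw [zero_add] at hc
  rw [hc, taylor_coeff_zero]
  exact hev

lemma sum_rootMultiplicity_le (u : K[X]) (A : Finset K) :
    ∑ b ∈ A, rootMultiplicity b u ≤ u.natDegree := by
  classical
  have h1 : ∑ b ∈ A, rootMultiplicity b u = ∑ b ∈ A, u.roots.count b := by
    refine Finset.sum_congr rfl fun b _ => ?_
    rw [Polynomial.count_roots]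
  rw [h1]
  have h2 : ∑ b ∈ A, u.roots.count b ≤ ∑ b ∈ u.roots.toFinset, u.roots.count b := by
    rw [← Finset.sum_subset (Finset.inter_subset_left (s₂ := u.roots.toFinset))
      (fun x hx hx' => ?_)]
    · exact Finset.sum_le_sum_of_subset Finset.inter_subset_right
    · rw [Multiset.count_eq_zero]
      intro hmem
      exact hx' (Finset.mem_inter.2 ⟨hx, Multiset.mem_toFinset.2 hmem⟩)
  calc ∑ b ∈ A, u.roots.count b ≤ ∑ b ∈ u.roots.toFinset, u.roots.count b := h2
    _ = Multiset.card u.roots := u.roots.toFinset_sum_count_eq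
    _ ≤ u.natDegree := u.card_roots'

lemma coeff_comp_X_add_C {S : Type*} [CommRing S] (p : S[X]) (c : S) (r N : ℕ)
    (hN : p.natDegree < N) :
    (p.comp (Polynomial.X + Polynomial.C c)).coeff r =
      ∑ j ∈ Finset.range N, p.coeff j * (c ^ (j - r) * (j.choose r : S)) := by
  conv_lhs => rw [p.as_sum_range' N hN]
  rw [Polynomial.comp, Polynomial.eval₂_finset_sum, Polynomial.finset_sum_coeff]
  refine Finset.sum_congr rfl fun j _ => ?_
  rw [Polynomial.eval₂_monomial, Polynomial.coeff_C_mul, Polynomial.coeff_X_add_C_pow]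

end Univariate

variable {n : ℕ}

lemma finSuccEquiv_tr (b : F) (a : Fin n → F) (P : MvPolynomial (Fin (n + 1)) F) :
    finSuccEquiv F n (tr (Fin.cons b a) P) =
      ((finSuccEquiv F n P).map (tr a)).comp (Polynomial.X + Polynomial.C (C b)) := by
  have h : ((Polynomial.eval₂RingHom Polynomial.C
        (Polynomial.X + Polynomial.C (C b : MvPolynomial (Fin n) F))).comp
      ((Polynomial.mapRingHom (tr a)).comp
        (finSuccEquiv F n : MvPolynomial (Fin (n + 1)) F →+* _))) =
      ((finSuccEquiv F n : MvPolynomial (Fin (n + 1)) F →+* _).comp (tr (Fin.cons b a))) := by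
    apply MvPolynomial.ringHom_ext
    · intro r
      simp [tr, finSuccEquiv_apply]
    · intro i
      refine Fin.cases ?_ ?_ i
      · simp [tr, finSuccEquiv_X_zero, finSuccEquiv_apply, add_comm]
      · intro k
        simp [tr, finSuccEquiv_X_succ, finSuccEquiv_apply]
  have := congrArg (fun g => g P) h
  simpa [Polynomial.comp] using this.symm

/-- The univariate polynomial whose `j`-th coefficient is the `β`-coefficient of the `j`-th
coefficient of `W`. -/
noncomputable def sliceU (β : Fin n →₀ ℕ) (W : Polynomial (MvPolynomial (Fin n) F)) :
    Polynomial F :=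
  ∑ j ∈ Finset.range (W.natDegree + 1), Polynomial.C (coeff β (W.coeff j)) * Polynomial.X ^ j

lemma sliceU_coeff (β : Fin n →₀ ℕ) (W : Polynomial (MvPolynomial (Fin n) F)) (j : ℕ) :
    (sliceU β W).coeff j = coeff β (W.coeff j) := by
  rw [sliceU, Polynomial.finset_sum_coeff]
  simp only [Polynomial.coeff_C_mul, Polynomial.coeff_X_pow, mul_ite, mul_one, mul_zero]
  rw [Finset.sum_ite_eq (Finset.range (W.natDegree + 1)) j
    (fun i => coeff β (W.coeff i))]
  by_cases h : j ∈ Finset.range (W.natDegree + 1)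
  · rw [if_pos h]
  · rw [if_neg h, Polynomial.coeff_eq_zero_of_natDegree_lt, coeff_zero]
    exact lt_of_not_ge fun hle => h (Finset.mem_range.2 (Nat.lt_succ_of_le hle))

lemma sliceU_natDegree_le (β : Fin n →₀ ℕ) (W : Polynomial (MvPolynomial (Fin n) F)) :
    (sliceU β W).natDegree ≤ W.natDegree := by
  refine Polynomial.natDegree_le_iff_coeff_eq_zero.2 fun j hj => ?_
  rw [sliceU_coeff, Polynomial.coeff_eq_zero_of_natDegree_lt hj, coeff_zero]

lemma coeff_cons_tr (P : MvPolynomial (Fin (n + 1)) F) (a : Fin n → F) (b : F)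
    (β : Fin n →₀ ℕ) (r : ℕ) :
    coeff (Finsupp.cons r β) (tr (Fin.cons b a) P) =
      (Polynomial.taylor b
        (sliceU β ((finSuccEquiv F n P).map (tr a)))).coeff r := by
  set W := (finSuccEquiv F n P).map (tr a : MvPolynomial (Fin n) F →+* _) with hW
  rw [← finSuccEquiv_coeff_coeff, finSuccEquiv_tr, Polynomial.taylor_apply]
  set N := W.natDegree + 1 with hN
  rw [coeff_comp_X_add_C W (C b) r N (Nat.lt_succ_self _),
    coeff_comp_X_add_C (sliceU β W) b r N
      (Nat.lt_succ_of_le (sliceU_natDegree_le β W)),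
    MvPolynomial.coeff_sum]
  refine Finset.sum_congr rfl fun j _ => ?_
  rw [sliceU_coeff]
  rw [← map_pow (C : F →+* MvPolynomial (Fin n) F) b (j - r)]
  rw [show ((j.choose r : ℕ) : MvPolynomial (Fin n) F) = C ((j.choose r : ℕ) : F) by
    simp]
  rw [← map_mul (C : F →+* MvPolynomial (Fin n) F), mul_comm (W.coeff j),
    MvPolynomial.coeff_C_mul, mul_comm]

lemma sum_cons_finsupp (r : ℕ) (β : Fin n →₀ ℕ) :
    (∑ i : Fin (n + 1), (Finsupp.cons r β) i) = r + ∑ i : Fin n, β i := by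
  rw [Fin.sum_univ_succ]
  simp [Finsupp.cons_zero, Finsupp.cons_succ]

end SZAux

section Main

open MvPolynomial SZAux

variable {F : Type*} [Field F] {n : ℕ}

lemma sz_step (P : MvPolynomial (Fin (n + 1)) F) (hP : P ≠ 0) (A : Finset F)
    (a : Fin n → F) :
    ∑ b ∈ A, polyMult P (Fin.cons b a) ≤
      ((A.card *
          (polyMult ((finSuccEquiv F n P).coeff (finSuccEquiv F n P).natDegree) a).toNat
        + (finSuccEquiv F n P).natDegree : ℕ) : ℕ∞) := by
  classical
  set Q := finSuccEquiv F n P with hQdef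
  set t := Q.natDegree with ht
  have hQ : Q ≠ 0 := by
    simp only [hQdef, ne_eq, EmbeddingLike.map_eq_zero_iff]
    exact hP
  have hct : Q.coeff t ≠ 0 := by
    rw [← Polynomial.leadingCoeff]
    exact Polynomial.leadingCoeff_ne_zero.2 hQ
  have hg : tr a (Q.coeff t) ≠ 0 := tr_eq_zero_iff.not.2 hct
  obtain ⟨β, hβ, hord⟩ := exists_ord hg
  have hm : polyMult (Q.coeff t) a = ((∑ i, β i : ℕ) : ℕ∞) := by
    rw [polyMult_eq]; exact hord
  have hmt : (polyMult (Q.coeff t) a).toNat = ∑ i, β i := by rw [hm, ENat.toNat_coe]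
  set W := Q.map (tr a : MvPolynomial (Fin n) F →+* _) with hWdef
  set u := sliceU β W with hu_def
  have hWc : ∀ j, W.coeff j = tr a (Q.coeff j) := fun j => Polynomial.coeff_map _ _
  have hut : u.coeff t ≠ 0 := by rw [hu_def, sliceU_coeff, hWc]; exact hβ
  have hu : u ≠ 0 := fun h => hut (by simp [h])
  have hundeg : u.natDegree ≤ t :=
    le_trans (sliceU_natDegree_le β W) Polynomial.natDegree_map_le
  have key : ∀ b : F, polyMult P (Fin.cons b a) ≤
      (((∑ i, β i) + Polynomial.rootMultiplicity b u : ℕ) : ℕ∞) := by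
    intro b
    rw [polyMult_eq]
    have hc : coeff (Finsupp.cons (Polynomial.rootMultiplicity b u) β)
        (tr (Fin.cons b a) P) ≠ 0 := by
      rw [coeff_cons_tr]
      exact taylor_coeff_rootMultiplicity_ne_zero hu b
    refine le_trans (ord_le hc) ?_
    rw [Nat.cast_le, sum_cons_finsupp]
    omega
  calc ∑ b ∈ A, polyMult P (Fin.cons b a)
      ≤ ∑ b ∈ A, (((∑ i, β i) + Polynomial.rootMultiplicity b u : ℕ) : ℕ∞) :=
        Finset.sum_le_sum fun b _ => key b
    _ = ((∑ b ∈ A, ((∑ i, β i) + Polynomial.rootMultiplicity b u) : ℕ) : ℕ∞) := by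
        rw [Nat.cast_sum]
    _ ≤ _ := by
        rw [Nat.cast_le, hmt]
        rw [Finset.sum_add_distrib, Finset.sum_const, smul_eq_mul]
        exact add_le_add le_rfl (le_trans (sum_rootMultiplicity_le u A) hundeg)

lemma sum_piFinset_cons {M : Type*} [AddCommMonoid M] (A : Finset F)
    (g : (Fin (n + 1) → F) → M) :
    ∑ x ∈ Fintype.piFinset (fun _ : Fin (n + 1) => A), g x =
      ∑ a ∈ Fintype.piFinset (fun _ : Fin n => A), ∑ b ∈ A, g (Fin.cons b a) := by
  classical
  rw [← Finset.sum_product' (f := fun a b => g (Fin.cons b a))]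
  refine Finset.sum_nbij' (fun x => (Fin.tail x, x 0)) (fun y => Fin.cons y.2 y.1)
    ?_ ?_ ?_ ?_ ?_
  · intro x hx
    rw [Finset.mem_product]
    constructor
    · rw [Fintype.mem_piFinset] at hx ⊢
      exact fun i => hx _
    · exact (Fintype.mem_piFinset.1 hx) 0
  · intro y hy
    rw [Finset.mem_product] at hy
    rw [Fintype.mem_piFinset]
    intro i
    refine Fin.cases ?_ ?_ i
    · simpa using hy.2
    · intro k
      simpa using (Fintype.mem_piFinset.1 hy.1) k
  · intro x _
    exact Fin.cons_self_tail x
  · intro y _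
    simp [Fin.tail_cons]
  · intro x _
    rw [Fin.cons_self_tail]

lemma sz_main : ∀ (n : ℕ) (d : ℕ) (A : Finset F)
    (P : MvPolynomial (Fin n) F), P ≠ 0 → P.totalDegree ≤ d →
    ∑ a ∈ Fintype.piFinset (fun _ : Fin n => A), polyMult P a ≤
      ((d * A.card ^ (n - 1) : ℕ) : ℕ∞) := by
  intro n
  induction n with
  | zero =>
    intro d A P hP _
    have : ∑ a ∈ Fintype.piFinset (fun _ : Fin 0 => A), polyMult P a = 0 :=
      Finset.sum_eq_zero fun a _ => polyMult_zerovars hP a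
    rw [this]
    exact zero_le
  | succ n ih =>
    intro d A P hP hd
    classical
    set Q := finSuccEquiv F n P with hQdef
    set t := Q.natDegree with ht
    have hQ : Q ≠ 0 := by
      simp only [hQdef, ne_eq, EmbeddingLike.map_eq_zero_iff]; exact hP
    have hct : Q.coeff t ≠ 0 := by
      rw [← Polynomial.leadingCoeff]; exact Polynomial.leadingCoeff_ne_zero.2 hQ
    set d' := (Q.coeff t).totalDegree with hd'
    have hdt : d' + t ≤ d :=
      le_trans (totalDegree_coeff_finSuccEquiv_add_le P t hct) hd
    set m : (Fin n → F) → ℕ := fun a => (polyMult (Q.coeff t) a).toNat with hmdef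
    set S := ∑ a ∈ Fintype.piFinset (fun _ : Fin n => A), m a with hS
    -- bound S
    have hScast : ((S : ℕ) : ℕ∞) =
        ∑ a ∈ Fintype.piFinset (fun _ : Fin n => A), polyMult (Q.coeff t) a := by
      rw [hS, Nat.cast_sum]
      exact Finset.sum_congr rfl fun a _ => (polyMult_coe_toNat hct a).symm
    have hSle : S ≤ d' * A.card ^ (n - 1) := by
      have := ih d' A (Q.coeff t) hct le_rfl
      rw [← hScast] at this
      exact_mod_cast this
    have hScard : A.card * S + t * A.card ^ n ≤ d * A.card ^ n := by
      rcases Nat.eq_zero_or_pos n with hn | hn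
      · subst hn
        have hS0 : S = 0 := by
          rw [hS]
          exact Finset.sum_eq_zero fun a _ => by
            rw [hmdef]
            simp [polyMult_zerovars hct a]
        rw [hS0]
        simp only [mul_zero, zero_add, pow_zero, mul_one]
        omega
      · obtain ⟨k, rfl⟩ := Nat.exists_eq_add_of_le hn
        have e1 : 1 + k - 1 = k := by omega
        rw [e1] at hSle
        calc A.card * S + t * A.card ^ (1 + k)
            ≤ A.card * (d' * A.card ^ k) + t * A.card ^ (1 + k) :=
              add_le_add (Nat.mul_le_mul_left _ hSle) le_rfl
          _ = (d' + t) * A.card ^ (1 + k) := by rw [pow_add, pow_one]; ring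
          _ ≤ d * A.card ^ (1 + k) := Nat.mul_le_mul_right _ hdt
    calc ∑ x ∈ Fintype.piFinset (fun _ : Fin (n + 1) => A), polyMult P x
        = ∑ a ∈ Fintype.piFinset (fun _ : Fin n => A), ∑ b ∈ A,
            polyMult P (Fin.cons b a) := sum_piFinset_cons A _
      _ ≤ ∑ a ∈ Fintype.piFinset (fun _ : Fin n => A),
            ((A.card * m a + t : ℕ) : ℕ∞) :=
          Finset.sum_le_sum fun a _ => sz_step P hP A a
      _ = ((∑ a ∈ Fintype.piFinset (fun _ : Fin n => A), (A.card * m a + t) : ℕ) : ℕ∞) := by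
          rw [Nat.cast_sum]
      _ ≤ ((d * A.card ^ ((n + 1) - 1) : ℕ) : ℕ∞) := by
          rw [Nat.cast_le]
          rw [Finset.sum_add_distrib, Finset.sum_const, smul_eq_mul, ← Finset.mul_sum]
          have hcardpi : (Fintype.piFinset (fun _ : Fin n => A)).card = A.card ^ n := by
            rw [Fintype.card_piFinset]
            simp
          rw [hcardpi, Nat.add_sub_cancel]
          calc A.card * S + A.card ^ n * t = A.card * S + t * A.card ^ n := by ring
            _ ≤ d * A.card ^ n := hScard

end Main

/-- Multiplicity-enhanced Schwartz–Zippel: for a nonzero polynomial `P` of degree `d`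
and nonempty `A ⊆ 𝔽_q`, `Σ_{a ∈ A^n} mult(P, a) ≤ d · |A|^{n-1}`. -/
theorem sum_polyMult_le {F : Type*} [Field F] [Fintype F] [DecidableEq F]
    (q n d : ℕ) (hq : IsPrimePow q) (hcard : Fintype.card F = q)
    (A : Finset F) (hA : A.Nonempty)
    (P : MvPolynomial (Fin n) F) (hP : P ≠ 0) (hd : P.totalDegree = d) :
    ∑ a ∈ Fintype.piFinset (fun _ : Fin n => A), polyMult P a ≤
      ((d * A.card ^ (n - 1) : ℕ) : ℕ∞) := by
  exact sz_main n d A P hP (le_of_eq hd)
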